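/- Let n₀ ∈ ℤ, δ > 0, let R : (0,δ) → ℝ be continuous, and let (r_n)_{n ≥ n₀} be real numbers such that for every integer N ≥ n₀ one has R(y) − ∑_{n=n₀}^{N} r_n yⁿ = o(y^{N}) as y → 0⁺. Let α < 0 and fix d₀ ∈ (0, e^{−1/δ}). Then the function f(y) := e^{α/y}·∫_{e^{−1/y}}^{d₀} s^{α−1}·R(−1/log s) ds, defined for all sufficiently small y > 0, admits a power asymptotic expansion at 0⁺: there exists a sequence (a_n)_{n ≥ n₀} of reals such that for every integer N ≥ n₀, f(y) − ∑_{n=n₀}^{N} a_n yⁿ = o(y^{N}) as y → 0⁺. -/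

import Mathlib

open Set Filter Topology Asymptotics intervalIntegral

lemma auxExpTendsto (α : ℝ) (hα : α < 0) (N : ℤ) :
    Tendsto (fun y : ℝ => Real.exp (α / y) / y ^ N) (𝓝[>] (0:ℝ)) (𝓝 0) := by
  have h := (tendsto_rpow_mul_exp_neg_mul_atTop_nhds_zero (N:ℝ) (-α) (by linarith)).comp
      tendsto_inv_nhdsGT_zero
  refine h.congr' ?_
  filter_upwards [self_mem_nhdsWithin] with y hy
  have hy' : (0:ℝ) < y := hy
  simp only [Function.comp]
  have h1 : ((y⁻¹:ℝ) ^ (N:ℝ)) = (y^N)⁻¹ := by rw [Real.rpow_intCast, inv_zpow]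
  rw [h1, neg_neg, mul_comm, div_eq_mul_inv α y, ← div_eq_mul_inv]

lemma auxExp (α : ℝ) (hα : α < 0) (N : ℤ) :
    (fun y : ℝ => Real.exp (α / y)) =o[𝓝[>] 0] fun y : ℝ => y ^ N := by
  rw [isLittleO_iff_tendsto']
  · exact auxExpTendsto α hα N
  · filter_upwards [self_mem_nhdsWithin] with y hy h
    exact absurd h (zpow_ne_zero N (ne_of_gt hy))

lemma auxDeriv (α : ℝ) (n : ℤ) {t : ℝ} (ht : t ≠ 0) :
    HasDerivAt (fun t : ℝ => Real.exp (-α / t) * t ^ n)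
      (Real.exp (-α / t) * (α * t ^ (n - 2) + n * t ^ (n - 1))) t := by
  have h1 : HasDerivAt (fun t : ℝ => -α / t) (α / t ^ 2) t := by
    have := (hasDerivAt_inv ht).const_mul (-α)
    simpa [div_eq_mul_inv, neg_mul, neg_neg, mul_comm] using this
  have h2 := h1.exp
  have h3 : HasDerivAt (fun t : ℝ => (t:ℝ) ^ n) ((n:ℝ) * t ^ (n-1)) t :=
    hasDerivAt_zpow n t (Or.inl ht)
  have h4 := h2.mul h3
  refine h4.congr_deriv ?_
  have ht2 : t ^ (n - 2) = t ^ n / t ^ (2:ℕ) := by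
    rw [← zpow_natCast t 2, ← zpow_sub₀ ht]
    norm_num
  rw [ht2]
  field_simp

lemma auxCont (β : ℝ) (m : ℤ) {s : Set ℝ} (hs : ∀ x ∈ s, x ≠ 0) :
    ContinuousOn (fun t : ℝ => Real.exp (β / t) * t ^ m) s := by
  intro x hx
  have hx0 := hs x hx
  apply ContinuousAt.continuousWithinAt
  exact (Real.continuous_exp.continuousAt.comp
    ((continuousAt_const.div continuousAt_id hx0))).mul (continuousAt_zpow₀ x m (Or.inl hx0))
lemma auxJ (α : ℝ) (hα : α < 0) (n : ℤ) :
    ∃ η₀ : ℝ, 0 < η₀ ∧ ∀ η : ℝ, 0 < η → η ≤ η₀ → ∀ y : ℝ, 0 < y → y ≤ η →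
      (∫ t in y..η, Real.exp (-α / t) * t ^ (n - 2)) ≤
        (-2 / α) * (Real.exp (-α / y) * y ^ n) := by
  have hnegα : (0:ℝ) < -α := by linarith
  refine ⟨(-α) / (2 * (|(n:ℝ)| + 1)), by positivity, ?_⟩
  intro η hη hηle y hy hyη
  have hne : ∀ x ∈ uIcc y η, x ≠ 0 := by
    rw [uIcc_of_le hyη]
    intro x hx; exact (lt_of_lt_of_le hy hx.1).ne'
  have hpos : ∀ x ∈ Icc y η, 0 < x := fun x hx => lt_of_lt_of_le hy hx.1
  have hInt : ∀ m : ℤ, IntervalIntegrable (fun t => Real.exp (-α / t) * t ^ m) MeasureTheory.volume y η :=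
    fun m => (auxCont (-α) m hne).intervalIntegrable
  set Jn := ∫ t in y..η, Real.exp (-α / t) * t ^ (n - 2) with hJn
  set Jn1 := ∫ t in y..η, Real.exp (-α / t) * t ^ (n - 1) with hJn1
  have key : α * Jn + n * Jn1 = Real.exp (-α/η) * η ^ n - Real.exp (-α/y) * y ^ n := by
    have hftc := intervalIntegral.integral_eq_sub_of_hasDerivAt
      (f := fun t : ℝ => Real.exp (-α / t) * t ^ n)
      (f' := fun t : ℝ => Real.exp (-α / t) * (α * t ^ (n - 2) + n * t ^ (n - 1)))
      (fun x hx => auxDeriv α n (hne x hx)) ?_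
    · rw [← hftc]
      have : (∫ t in y..η, Real.exp (-α / t) * (α * t ^ (n - 2) + n * t ^ (n - 1)))
          = (∫ t in y..η, α * (Real.exp (-α / t) * t ^ (n - 2)) + n * (Real.exp (-α / t) * t ^ (n - 1))) := by
        congr 1; funext t; ring
      rw [this, intervalIntegral.integral_add ((hInt (n-2)).const_mul α) ((hInt (n-1)).const_mul (n:ℝ)),
        intervalIntegral.integral_const_mul, intervalIntegral.integral_const_mul]
    · have : ContinuousOn (fun t : ℝ => Real.exp (-α / t) * (α * t ^ (n - 2) + n * t ^ (n - 1))) (uIcc y η) := by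
        have h1 := (auxCont (-α) (n-2) hne).const_smul α
        have h2 := (auxCont (-α) (n-1) hne).const_smul (n:ℝ)
        refine (h1.add h2).congr fun x hx => ?_
        simp only [Pi.add_apply, Pi.smul_apply, smul_eq_mul]
        ring
      exact this.intervalIntegrable
  have hJn_nonneg : 0 ≤ Jn := by
    apply intervalIntegral.integral_nonneg hyη
    intro u hu; have := hpos u hu; positivity
  have hJn1_nonneg : 0 ≤ Jn1 := by
    apply intervalIntegral.integral_nonneg hyη
    intro u hu; have := hpos u hu; positivity
  have hmono : Jn1 ≤ η * Jn := by
    rw [← intervalIntegral.integral_const_mul]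
    apply intervalIntegral.integral_mono_on hyη (hInt (n-1)) ((hInt (n-2)).const_mul η)
    intro t ht
    have htpos := hpos t ht
    have h1 : t ^ (n - 1) = t * t ^ (n - 2) := by
      rw [mul_comm, ← zpow_add_one₀ htpos.ne' (n-2)]
      congr 1; omega
    rw [h1]
    have h2 : Real.exp (-α / t) * (t * t ^ (n-2)) = t * (Real.exp (-α / t) * t ^ (n-2)) := by ring
    rw [h2]
    have hnn : 0 ≤ Real.exp (-α / t) * t ^ (n-2) := by positivity
    calc t * (Real.exp (-α / t) * t ^ (n-2)) ≤ η * (Real.exp (-α / t) * t ^ (n-2)) :=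
      mul_le_mul_of_nonneg_right ht.2 hnn
    _ = η * (Real.exp (-α / t) * t ^ (n-2)) := rfl
  have habs : (n : ℝ) * Jn1 ≤ |(n:ℝ)| * (η * Jn) := by
    calc (n:ℝ) * Jn1 ≤ |(n:ℝ)| * Jn1 := mul_le_mul_of_nonneg_right (le_abs_self _) hJn1_nonneg
    _ ≤ |(n:ℝ)| * (η * Jn) := mul_le_mul_of_nonneg_left hmono (abs_nonneg _)
  have hx := abs_nonneg (n:ℝ)
  have hηsmall : |(n:ℝ)| * η ≤ -α / 2 := by
    have h1 : |(n:ℝ)| * η ≤ |(n:ℝ)| * ((-α) / (2 * (|(n:ℝ)| + 1))) :=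
      mul_le_mul_of_nonneg_left hηle hx
    have h2 : |(n:ℝ)| * ((-α) / (2 * (|(n:ℝ)| + 1))) ≤ -α / 2 := by
      rw [mul_div_assoc', div_le_div_iff₀ (by positivity) (by norm_num)]
      nlinarith
    linarith
  have hbpos : 0 ≤ Real.exp (-α/η) * η ^ n := by positivity
  have hfinal : (-α / 2) * Jn ≤ Real.exp (-α/y) * y ^ n := by
    nlinarith [mul_le_mul_of_nonneg_right hηsmall hJn_nonneg]
  rw [div_mul_eq_mul_div, le_div_iff_of_neg hα]
  nlinarith [hfinal]

noncomputable def stmt16CoeffAux (n₀ : ℤ) (r : ℤ → ℝ) (α : ℝ) : ℕ → ℝ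
  | 0 => -r n₀ / α
  | (k+1) => -(r (n₀ + k + 1) + ((n₀ : ℝ) + k) * stmt16CoeffAux n₀ r α k) / α

lemma auxCoeff (n₀ : ℤ) (r : ℤ → ℝ) (α : ℝ) : ∃ a : ℤ → ℝ,
    a n₀ = -r n₀ / α ∧ ∀ n : ℤ, n₀ ≤ n → a (n+1) = -(r (n+1) + (n:ℝ) * a n) / α := by
  refine ⟨fun n => if n₀ ≤ n then stmt16CoeffAux n₀ r α (n - n₀).toNat else 0, ?_, ?_⟩
  · simp [stmt16CoeffAux]
  · intro n hn
    have h1 : (n + 1 - n₀).toNat = (n - n₀).toNat + 1 := by omega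
    simp only [if_pos hn, if_pos (by omega : n₀ ≤ n + 1), h1, stmt16CoeffAux]
    have h2 : ((n - n₀).toNat : ℤ) = n - n₀ := by omega
    have h3 : n₀ + ((n - n₀).toNat : ℤ) + 1 = n + 1 := by omega
    rw [show n₀ + ((n - n₀).toNat : ℕ) + 1 = n + 1 from by push_cast [h2]; ring]
    congr 2
    have h2' : (((n - n₀).toNat : ℕ) : ℝ) = (n:ℝ) - (n₀:ℝ) := by
      have := congrArg (fun z : ℤ => (z : ℝ)) h2
      push_cast at this; exact this
    rw [h2']; ring

lemma auxIccInsert (a b : ℤ) (h : a ≤ b + 1) :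
    Finset.Icc a (b+1) = insert (b+1) (Finset.Icc a b) := by
  ext x; simp only [Finset.mem_Icc, Finset.mem_insert]; omega

lemma auxPoly (α : ℝ) (hα : α ≠ 0) (n₀ : ℤ) (r a : ℤ → ℝ)
    (ha0 : a n₀ = -r n₀ / α)
    (harec : ∀ n : ℤ, n₀ ≤ n → a (n+1) = -(r (n+1) + (n:ℝ) * a n) / α)
    (N : ℤ) (hN : n₀ ≤ N) (t : ℝ) (ht : t ≠ 0) :
    ∑ n ∈ Finset.Icc n₀ N, a n * (α * t ^ (n-2) + n * t ^ (n-1))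
      = -∑ n ∈ Finset.Icc n₀ N, r n * t ^ (n-2) + N * a N * t ^ (N-1) := by
  obtain ⟨k, rfl⟩ : ∃ k : ℕ, N = n₀ + k := ⟨(N - n₀).toNat, by omega⟩
  clear hN
  induction k with
  | zero =>
      simp only [Nat.cast_zero, add_zero, Finset.Icc_self, Finset.sum_singleton]
      have hb : α * a n₀ = -r n₀ := by rw [ha0]; field_simp; try ring
      linear_combination (t ^ (n₀ - 2)) * hb
  | succ k ih =>
      have e : n₀ + ((k+1 : ℕ) : ℤ) = (n₀ + (k:ℤ)) + 1 := by push_cast; ring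
      rw [e]
      have hMge : n₀ ≤ n₀ + (k:ℤ) := by omega
      have hIns := auxIccInsert n₀ (n₀ + (k:ℤ)) (by omega)
      have hnm : (n₀ + (k:ℤ)) + 1 ∉ Finset.Icc n₀ (n₀ + (k:ℤ)) := by
        simp only [Finset.mem_Icc]; omega
      rw [hIns, Finset.sum_insert hnm, Finset.sum_insert hnm, ih]
      have hrec : α * a (n₀ + (k:ℤ) + 1) = -(r (n₀ + (k:ℤ) + 1) + ((n₀ + (k:ℤ) : ℤ):ℝ) * a (n₀ + (k:ℤ))) := by
        rw [harec _ hMge]; field_simp; try ring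
      simp only [show n₀ + (k:ℤ) + 1 - 2 = n₀ + (k:ℤ) - 1 from by ring,
        show n₀ + (k:ℤ) + 1 - 1 = n₀ + (k:ℤ) from by ring]
      push_cast at hrec ⊢
      linear_combination (t ^ (n₀ + (k:ℤ) - 1)) * hrec

lemma auxCoV (α δ : ℝ) (R : ℝ → ℝ) (hRcont : ContinuousOn R (Ioo 0 δ))
    (y b : ℝ) (hy : 0 < y) (hyb : y ≤ b) (hbδ : b < δ) :
    (∫ s in Real.exp (-1/y)..Real.exp (-1/b), s ^ (α - 1) * R (-1 / Real.log s))
      = ∫ t in y..b, Real.exp (-α/t) / t^2 * R t := by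
  have huIcc : uIcc y b = Icc y b := uIcc_of_le hyb
  have hposx : ∀ x ∈ uIcc y b, 0 < x := by
    rw [huIcc]; exact fun x hx => lt_of_lt_of_le hy hx.1
  have hder : ∀ x ∈ uIcc y b, HasDerivAt (fun t : ℝ => Real.exp (-1/t))
      (Real.exp (-1/x) / x^2) x := by
    intro x hx
    have hx0 := (hposx x hx).ne'
    have h1 : HasDerivAt (fun t : ℝ => -1/t) (1/x^2) x := by
      have := (hasDerivAt_inv hx0).fun_neg
      simpa [one_div, neg_div] using this
    have := h1.exp
    simpa [div_eq_mul_inv] using this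
  have hder' : ContinuousOn (fun x : ℝ => Real.exp (-1/x) / x^2) (uIcc y b) := by
    intro x hx
    have hx0 := (hposx x hx).ne'
    exact ((Real.continuous_exp.continuousAt.comp
      ((continuousAt_const.div continuousAt_id hx0))).div
      (continuousAt_pow x 2) (pow_ne_zero 2 hx0)).continuousWithinAt
  have himg : ∀ s ∈ (fun t : ℝ => Real.exp (-1/t)) '' uIcc y b,
      0 < s ∧ Real.log s < 0 ∧ (-1 / Real.log s) ∈ Ioo 0 δ := by
    rintro s ⟨x, hx, rfl⟩
    have hxpos := hposx x hx
    rw [huIcc] at hx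
    have hlog : Real.log (Real.exp (-1/x)) = -1/x := Real.log_exp _
    refine ⟨Real.exp_pos _, ?_, ?_⟩
    · rw [hlog]; rw [neg_div]; simp [hxpos]
    · rw [hlog, show -1 / (-1/x) = x from by field_simp]
      exact ⟨hxpos, lt_of_le_of_lt hx.2 hbδ⟩
  have hg : ContinuousOn (fun s : ℝ => s ^ (α - 1) * R (-1 / Real.log s))
      ((fun t : ℝ => Real.exp (-1/t)) '' uIcc y b) := by
    intro s hs
    obtain ⟨hspos, hlogneg, hmem⟩ := himg s hs
    have h1 : ContinuousAt (fun s : ℝ => s ^ (α - 1)) s :=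
      Real.continuousAt_rpow_const s (α - 1) (Or.inl hspos.ne')
    have h2 : ContinuousWithinAt (fun s : ℝ => R (-1 / Real.log s))
        ((fun t : ℝ => Real.exp (-1/t)) '' uIcc y b) s := by
      have hl : ContinuousAt (fun s : ℝ => -1 / Real.log s) s :=
        continuousAt_const.div (Real.continuousAt_log hspos.ne') hlogneg.ne
      exact ContinuousWithinAt.comp (g := R) (f := fun s : ℝ => -1 / Real.log s)
        (hRcont.continuousWithinAt hmem) hl.continuousWithinAt
        (fun u hu => (himg u hu).2.2)
    exact (h1.continuousWithinAt.mul h2)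
  have hmain := intervalIntegral.integral_comp_smul_deriv' hder hder' hg
  rw [← hmain]
  apply intervalIntegral.integral_congr
  intro x hx
  have hxpos := hposx x hx
  simp only [smul_eq_mul, Function.comp]
  rw [Real.log_exp, show -1 / (-1/x) = x from by field_simp,
    Real.rpow_def_of_pos (Real.exp_pos _), Real.log_exp]
  have h3 : Real.exp (-1/x) / x^2 * (Real.exp (-1/x * (α-1)) * R x)
      = (Real.exp (-1/x) * Real.exp (-1/x * (α-1))) * R x / x^2 := by ring
  rw [h3, ← Real.exp_add, show -1/x + -1/x * (α-1) = -α/x from by field_simp; ring]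
  ring

/-- STATEMENT 16: if `R` is continuous on `(0,δ)` and admits the power asymptotic
expansion `∑_{n ≥ n₀} r_n yⁿ` at `0⁺`, `α < 0` and `d₀ ∈ (0, e^{−1/δ})`, then
`f(y) = e^{α/y} ∫_{e^{−1/y}}^{d₀} s^{α−1} R(−1/log s) ds` admits a power asymptotic
expansion `∑_{n ≥ n₀} a_n yⁿ` at `0⁺`. -/
theorem stmt16 (n₀ : ℤ) (δ : ℝ) (hδ : 0 < δ) (R : ℝ → ℝ)
    (hRcont : ContinuousOn R (Ioo 0 δ))
    (r : ℤ → ℝ)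
    (hexp : ∀ N : ℤ, n₀ ≤ N →
      (fun y : ℝ => R y - ∑ n ∈ Finset.Icc n₀ N, r n * y ^ n)
        =o[𝓝[>] 0] fun y : ℝ => y ^ N)
    (α : ℝ) (hα : α < 0)
    (d₀ : ℝ) (hd₀ : d₀ ∈ Ioo 0 (Real.exp (-1 / δ))) :
    ∃ a : ℤ → ℝ, ∀ N : ℤ, n₀ ≤ N →
      (fun y : ℝ =>
          Real.exp (α / y) *
            (∫ s in Real.exp (-1 / y)..d₀, s ^ (α - 1) * R (-1 / Real.log s)) -
          ∑ n ∈ Finset.Icc n₀ N, a n * y ^ n)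
        =o[𝓝[>] 0] fun y : ℝ => y ^ N := by
  obtain ⟨a, ha0, harec⟩ := auxCoeff n₀ r α
  refine ⟨a, fun N hN => ?_⟩
  obtain ⟨hd₀pos, hd₀lt⟩ := hd₀
  have hαne : α ≠ 0 := ne_of_lt hα
  have hnegα : (0:ℝ) < -α := by linarith
  have hlogd₀ : Real.log d₀ < -1/δ := by
    have h := Real.log_lt_log hd₀pos hd₀lt
    rwa [Real.log_exp] at h
  rw [neg_div] at hlogd₀
  have hδinv : (0:ℝ) < 1/δ := by positivity
  have hlogneg : Real.log d₀ < 0 := by linarith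
  set y₀ : ℝ := -1 / Real.log d₀ with hy₀def
  have hy₀eq : y₀ = 1 / (-Real.log d₀) := by rw [hy₀def]; ring
  have hlogpos : 0 < -Real.log d₀ := by linarith
  have hy₀pos : 0 < y₀ := by rw [hy₀eq]; positivity
  have hy₀δ : y₀ < δ := by
    rw [hy₀eq]
    have h1 : 1/δ < -Real.log d₀ := by linarith
    calc 1 / (-Real.log d₀) < 1 / (1/δ) := one_div_lt_one_div_of_lt hδinv h1
    _ = δ := one_div_one_div δ
  have hd₀eq : Real.exp (-1 / y₀) = d₀ := by
    rw [hy₀def, show -1 / (-1 / Real.log d₀) = Real.log d₀ from by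
      field_simp]
    exact Real.exp_log hd₀pos
  have hρo : (fun t : ℝ => R t - ∑ n ∈ Finset.Icc n₀ N, r n * t ^ n)
      =o[𝓝[>] (0:ℝ)] (fun y => y ^ N) := hexp N hN
  obtain ⟨η₁, hη₁pos, hJ₁⟩ := auxJ α hα N
  obtain ⟨η₂, hη₂pos, hJ₂⟩ := auxJ α hα (N+1)
  set η : ℝ := min (min η₁ η₂) (y₀/2) with hηdef
  have hηpos : 0 < η := lt_min (lt_min hη₁pos hη₂pos) (by linarith)
  have hηy₀ : η < y₀ := lt_of_le_of_lt (min_le_right _ _) (by linarith)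
  have hηδ : η < δ := lt_trans hηy₀ hy₀δ
  have hηη₁ : η ≤ η₁ := le_trans (min_le_left _ _) (min_le_left _ _)
  have hηη₂ : η ≤ η₂ := le_trans (min_le_left _ _) (min_le_right _ _)
  -- continuity helpers
  have hRc : ∀ u v : ℝ, 0 < u → v < δ → ContinuousOn R (Icc u v) := fun u v hu hv =>
    hRcont.mono (fun x hx => ⟨lt_of_lt_of_le hu hx.1, lt_of_le_of_lt hx.2 hv⟩)
  have hB : ∀ u v : ℝ, 0 < u → ContinuousOn (fun t : ℝ => Real.exp (-α/t) / t^2) (Icc u v) := by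
    intro u v hu x hx
    have hx0 : x ≠ 0 := (lt_of_lt_of_le hu hx.1).ne'
    exact ((Real.continuous_exp.continuousAt.comp
      (continuousAt_const.div continuousAt_id hx0)).div
      (continuousAt_pow x 2) (pow_ne_zero 2 hx0)).continuousWithinAt
  have hpolyc : ∀ (c : ℤ → ℝ) (u v : ℝ), 0 < u →
      ContinuousOn (fun t : ℝ => ∑ n ∈ Finset.Icc n₀ N, c n * t ^ n) (Icc u v) := by
    intro c u v hu
    apply continuousOn_finset_sum
    intro n hn x hx
    have hx0 : x ≠ 0 := (lt_of_lt_of_le hu hx.1).ne'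
    exact (continuousAt_const.mul (continuousAt_zpow₀ x n (Or.inl hx0))).continuousWithinAt
  have hwint : ∀ u v : ℝ, 0 < u → u ≤ v → v < δ →
      IntervalIntegrable (fun t : ℝ => Real.exp (-α/t)/t^2 * R t) MeasureTheory.volume u v := by
    intro u v hu huv hv
    apply ContinuousOn.intervalIntegrable
    rw [uIcc_of_le huv]
    exact (hB u v hu).mul (hRc u v hu hv)
  have hρint : ∀ u v : ℝ, 0 < u → u ≤ v → v < δ →
      IntervalIntegrable (fun t : ℝ => Real.exp (-α/t)/t^2 *
        (R t - ∑ n ∈ Finset.Icc n₀ N, r n * t ^ n)) MeasureTheory.volume u v := by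
    intro u v hu huv hv
    apply ContinuousOn.intervalIntegrable
    rw [uIcc_of_le huv]
    exact (hB u v hu).mul ((hRc u v hu hv).sub (hpolyc r u v hu))
  have hQint : ∀ u v : ℝ, 0 < u → u ≤ v →
      IntervalIntegrable (fun t : ℝ => ∑ n ∈ Finset.Icc n₀ N,
        a n * (Real.exp (-α/t) * (α * t^(n-2) + n * t^(n-1)))) MeasureTheory.volume u v := by
    intro u v hu huv
    apply ContinuousOn.intervalIntegrable
    have hne : ∀ x ∈ uIcc u v, x ≠ 0 := by
      rw [uIcc_of_le huv]; exact fun x hx => (lt_of_lt_of_le hu hx.1).ne'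
    apply continuousOn_finset_sum
    intro n hn
    have := ((auxCont (-α) (n-2) hne).const_smul α).add ((auxCont (-α) (n-1) hne).const_smul ((n:ℝ)))
    refine (this.const_smul (a n)).congr fun x hx => ?_
    simp only [Pi.add_apply, Pi.smul_apply, smul_eq_mul]; ring
  have hJint : ∀ (m : ℤ) (u v : ℝ), 0 < u → u ≤ v →
      IntervalIntegrable (fun t : ℝ => Real.exp (-α/t) * t ^ m) MeasureTheory.volume u v := by
    intro m u v hu huv
    apply ContinuousOn.intervalIntegrable
    apply auxCont
    rw [uIcc_of_le huv]; exact fun x hx => (lt_of_lt_of_le hu hx.1).ne'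
  set S : ℝ → ℝ := fun t => ∑ n ∈ Finset.Icc n₀ N, a n * t ^ n with hSdef
  set K : ℝ := (∫ t in η..y₀, Real.exp (-α/t)/t^2 * R t) - Real.exp (-α/η) * S η with hKdef
  have hftcS : ∀ y : ℝ, 0 < y → y ≤ η →
      (∫ t in y..η, (∑ n ∈ Finset.Icc n₀ N,
          a n * (Real.exp (-α/t) * (α * t^(n-2) + n * t^(n-1)))))
        = Real.exp (-α/η) * S η - Real.exp (-α/y) * S y := by
    intro y hy hyη
    have hne : ∀ x ∈ uIcc y η, x ≠ 0 := by
      rw [uIcc_of_le hyη]; exact fun x hx => (lt_of_lt_of_le hy hx.1).ne'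
    apply intervalIntegral.integral_eq_sub_of_hasDerivAt
      (f := fun t : ℝ => Real.exp (-α/t) * S t)
    · intro x hx
      have hx0 := hne x hx
      have hsum : HasDerivAt (fun t : ℝ => ∑ n ∈ Finset.Icc n₀ N, a n * (Real.exp (-α/t) * t^n))
          (∑ n ∈ Finset.Icc n₀ N, a n * (Real.exp (-α/x) * (α * x^(n-2) + n * x^(n-1)))) x :=
        HasDerivAt.fun_sum (fun n _ => (auxDeriv α n hx0).const_mul (a n))
      have heq : (fun t : ℝ => Real.exp (-α/t) * S t)
          = fun t => ∑ n ∈ Finset.Icc n₀ N, a n * (Real.exp (-α/t) * t^n) := by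
        funext t
        rw [hSdef, Finset.mul_sum]
        apply Finset.sum_congr rfl
        intros; ring
      rw [heq]; exact hsum
    · exact hQint y η hy hyη
  have hexpinv : ∀ y : ℝ, Real.exp (α/y) * Real.exp (-α/y) = 1 := by
    intro y
    rw [← Real.exp_add, show α/y + -α/y = 0 from by ring, Real.exp_zero]
  have hdecomp : ∀ y : ℝ, y ∈ Ioo (0:ℝ) η →
      Real.exp (α / y) *
            (∫ s in Real.exp (-1 / y)..d₀, s ^ (α - 1) * R (-1 / Real.log s)) -
          (∑ n ∈ Finset.Icc n₀ N, a n * y ^ n)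
        = K * Real.exp (α/y)
          + Real.exp (α/y) * (∫ t in y..η, Real.exp (-α/t)/t^2 *
              (R t - ∑ n ∈ Finset.Icc n₀ N, r n * t ^ n))
          + ((N:ℝ) * a N) * (Real.exp (α/y) * ∫ t in y..η, Real.exp (-α/t) * t^(N+1-2)) := by
    intro y hy
    obtain ⟨hy0, hyη⟩ := hy
    have hyηle := le_of_lt hyη
    have hyy₀ : y ≤ y₀ := le_of_lt (lt_trans hyη hηy₀)
    have hcov : (∫ s in Real.exp (-1/y)..d₀, s ^ (α-1) * R (-1/Real.log s))
        = ∫ t in y..y₀, Real.exp (-α/t)/t^2 * R t := by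
      rw [← hd₀eq]
      exact auxCoV α δ R hRcont y y₀ hy0 hyy₀ hy₀δ
    have hsplit : (∫ t in y..y₀, Real.exp (-α/t)/t^2 * R t)
        = (∫ t in y..η, Real.exp (-α/t)/t^2 * R t)
          + (∫ t in η..y₀, Real.exp (-α/t)/t^2 * R t) :=
      (intervalIntegral.integral_add_adjacent_intervals
        (hwint y η hy0 hyηle hηδ) (hwint η y₀ hηpos (le_of_lt hηy₀) hy₀δ)).symm
    have hIptwise : ∀ t ∈ uIcc y η,
        Real.exp (-α/t)/t^2 * R t + (∑ n ∈ Finset.Icc n₀ N,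
            a n * (Real.exp (-α/t) * (α * t^(n-2) + n * t^(n-1))))
        = Real.exp (-α/t)/t^2 * (R t - ∑ n ∈ Finset.Icc n₀ N, r n * t ^ n)
          + ((N:ℝ) * a N) * (Real.exp (-α/t) * t^(N+1-2)) := by
      intro t ht
      rw [uIcc_of_le hyηle] at ht
      have ht0 : 0 < t := lt_of_lt_of_le hy0 ht.1
      have hP := auxPoly α hαne n₀ r a ha0 harec N hN t ht0.ne'
      have hfactor : (∑ n ∈ Finset.Icc n₀ N, a n * (Real.exp (-α/t) * (α * t^(n-2) + n * t^(n-1))))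
          = Real.exp (-α/t) * (∑ n ∈ Finset.Icc n₀ N, a n * (α * t^(n-2) + n * t^(n-1))) := by
        rw [Finset.mul_sum]
        apply Finset.sum_congr rfl
        intros; ring
      rw [hfactor, hP]
      have hsub : (∑ n ∈ Finset.Icc n₀ N, r n * t^(n-2))
          = (∑ n ∈ Finset.Icc n₀ N, r n * t^n) / t^2 := by
        rw [Finset.sum_div]
        apply Finset.sum_congr rfl
        intro n _
        rw [show t^(n-2) = t^n / t^(2:ℕ) from by
          rw [← zpow_natCast t 2, ← zpow_sub₀ ht0.ne']; norm_num]
        ring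
      rw [hsub, show (N:ℤ)+1-2 = N-1 from by ring]
      ring
    have hcomb : (∫ t in y..η, Real.exp (-α/t)/t^2 * R t)
          + (∫ t in y..η, (∑ n ∈ Finset.Icc n₀ N,
              a n * (Real.exp (-α/t) * (α * t^(n-2) + n * t^(n-1)))))
        = (∫ t in y..η, Real.exp (-α/t)/t^2 *
              (R t - ∑ n ∈ Finset.Icc n₀ N, r n * t ^ n))
          + ((N:ℝ) * a N) * (∫ t in y..η, Real.exp (-α/t) * t^(N+1-2)) := by
      rw [← intervalIntegral.integral_add (hwint y η hy0 hyηle hηδ) (hQint y η hy0 hyηle),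
        ← intervalIntegral.integral_const_mul,
        ← intervalIntegral.integral_add (hρint y η hy0 hyηle hηδ)
          ((hJint (N+1-2) y η hy0 hyηle).const_mul _)]
      exact intervalIntegral.integral_congr hIptwise
    have hftc := hftcS y hy0 hyηle
    have hSy : S y = Real.exp (α/y) * (Real.exp (-α/η) * S η
        - (∫ t in y..η, (∑ n ∈ Finset.Icc n₀ N,
            a n * (Real.exp (-α/t) * (α * t^(n-2) + n * t^(n-1)))))) := by
      have h1 : Real.exp (-α/η) * S η - (∫ t in y..η, (∑ n ∈ Finset.Icc n₀ N,
          a n * (Real.exp (-α/t) * (α * t^(n-2) + n * t^(n-1)))))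
          = Real.exp (-α/y) * S y := by linarith
      rw [h1, ← mul_assoc, hexpinv, one_mul]
    rw [hcov, hsplit]
    rw [show (∑ n ∈ Finset.Icc n₀ N, a n * y ^ n) = S y from rfl, hSy, hKdef]
    linear_combination Real.exp (α/y) * hcomb
  -- the three little-o pieces
  have hT1 : (fun y : ℝ => K * Real.exp (α/y)) =o[𝓝[>] (0:ℝ)] (fun y => y ^ N) :=
    (auxExp α hα N).const_mul_left K
  have hzo : (fun y : ℝ => y ^ (N+1)) =o[𝓝[>] (0:ℝ)] (fun y => y ^ N) := by
    rw [isLittleO_iff]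
    intro c hc
    filter_upwards [Ioo_mem_nhdsGT (lt_min hc zero_lt_one)] with y hy
    have hy0 : 0 < y := hy.1
    have hyc : y ≤ c := le_of_lt (lt_of_lt_of_le hy.2 (min_le_left _ _))
    rw [zpow_add_one₀ hy0.ne' N, Real.norm_eq_abs, Real.norm_eq_abs, abs_mul]
    calc |y ^ N| * |y| ≤ |y ^ N| * c := by
          apply mul_le_mul_of_nonneg_left _ (abs_nonneg _)
          rw [abs_of_pos hy0]; exact hyc
    _ = c * |y ^ N| := by ring
  have hT3 : (fun y : ℝ => ((N:ℝ) * a N) * (Real.exp (α/y) *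
      ∫ t in y..η, Real.exp (-α/t) * t^(N+1-2))) =o[𝓝[>] (0:ℝ)] (fun y => y ^ N) := by
    apply IsBigO.trans_isLittleO _ hzo
    rw [isBigO_iff]
    refine ⟨|(N:ℝ) * a N| * (-2/α), ?_⟩
    filter_upwards [Ioo_mem_nhdsGT hηpos] with y hy
    obtain ⟨hy0, hyη⟩ := hy
    have hJ := hJ₂ η hηpos hηη₂ y hy0 (le_of_lt hyη)
    have hint_nonneg : 0 ≤ ∫ t in y..η, Real.exp (-α/t) * t^(N+1-2) := by
      apply intervalIntegral.integral_nonneg (le_of_lt hyη)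
      intro u hu
      have hu0 : 0 < u := lt_of_lt_of_le hy0 hu.1
      positivity
    have hE : 0 < Real.exp (α/y) := Real.exp_pos _
    have habs : |((N:ℝ) * a N) * (Real.exp (α/y) * ∫ t in y..η, Real.exp (-α/t) * t^(N+1-2))|
        = |(N:ℝ) * a N| * (Real.exp (α/y) * ∫ t in y..η, Real.exp (-α/t) * t^(N+1-2)) := by
      rw [abs_mul, abs_of_nonneg (mul_nonneg hE.le hint_nonneg)]
    rw [Real.norm_eq_abs, Real.norm_eq_abs, habs, abs_of_pos (zpow_pos hy0 (N+1))]
    calc |(N:ℝ) * a N| * (Real.exp (α/y) * ∫ t in y..η, Real.exp (-α/t) * t^(N+1-2))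
        ≤ |(N:ℝ) * a N| * (Real.exp (α/y) * ((-2/α) * (Real.exp (-α/y) * y ^ (N+1)))) := by
          apply mul_le_mul_of_nonneg_left _ (abs_nonneg _)
          exact mul_le_mul_of_nonneg_left hJ (le_of_lt hE)
    _ = |(N:ℝ) * a N| * (-2/α) * ((Real.exp (α/y) * Real.exp (-α/y)) * y ^ (N+1)) := by ring
    _ = |(N:ℝ) * a N| * (-2/α) * y ^ (N+1) := by rw [hexpinv y, one_mul]
  have hT2 : (fun y : ℝ => Real.exp (α/y) * ∫ t in y..η, Real.exp (-α/t)/t^2 *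
      (R t - ∑ n ∈ Finset.Icc n₀ N, r n * t ^ n)) =o[𝓝[>] (0:ℝ)] (fun y => y ^ N) := by
    rw [isLittleO_iff]
    intro c hc
    have hεpos : 0 < c * (-α) / 4 := by positivity
    have hev := hρo.def hεpos
    have h2 : ∀ᶠ t in 𝓝[>] (0:ℝ), t ∈ Ioo (0:ℝ) η :=
      Filter.eventually_of_mem (Ioo_mem_nhdsGT hηpos) (fun t ht => ht)
    have h3 := hev.and h2
    rw [Filter.eventually_iff] at h3
    obtain ⟨u, hu, husub⟩ := mem_nhdsGT_iff_exists_Ioo_subset.mp h3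
    have hupos : (0:ℝ) < u := hu
    set η₃ : ℝ := min (u/2) (η/2) with hη₃def
    have hη₃pos : 0 < η₃ := lt_min (by linarith) (by linarith)
    have hη₃u : η₃ < u := lt_of_le_of_lt (min_le_left _ _) (by linarith)
    have hη₃η : η₃ < η := lt_of_le_of_lt (min_le_right _ _) (by linarith)
    have hη₃η₁ : η₃ ≤ η₁ := le_trans (le_of_lt hη₃η) hηη₁
    set D : ℝ := ∫ t in η₃..η, Real.exp (-α/t)/t^2 *
        (R t - ∑ n ∈ Finset.Icc n₀ N, r n * t ^ n) with hDdef
    have hDc : 0 < c/(2*(|D|+1)) := by positivity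
    have hDexp := (auxExp α hα N).def hDc
    filter_upwards [Ioo_mem_nhdsGT hη₃pos, hDexp] with y hy hDy
    obtain ⟨hy0, hyη₃⟩ := hy
    have hsplit : (∫ t in y..η, Real.exp (-α/t)/t^2 *
          (R t - ∑ n ∈ Finset.Icc n₀ N, r n * t ^ n))
        = (∫ t in y..η₃, Real.exp (-α/t)/t^2 *
            (R t - ∑ n ∈ Finset.Icc n₀ N, r n * t ^ n)) + D :=
      (intervalIntegral.integral_add_adjacent_intervals
        (hρint y η₃ hy0 (le_of_lt hyη₃) (lt_trans hη₃η hηδ))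
        (hρint η₃ η hη₃pos (le_of_lt hη₃η) hηδ)).symm
    have hb1 : |∫ t in y..η₃, Real.exp (-α/t)/t^2 *
          (R t - ∑ n ∈ Finset.Icc n₀ N, r n * t ^ n)|
        ≤ (c * (-α)/4) * ∫ t in y..η₃, Real.exp (-α/t) * t^(N-2) := by
      rw [← intervalIntegral.integral_const_mul]
      calc |∫ t in y..η₃, Real.exp (-α/t)/t^2 *
            (R t - ∑ n ∈ Finset.Icc n₀ N, r n * t ^ n)|
          ≤ ∫ t in y..η₃, |Real.exp (-α/t)/t^2 *
            (R t - ∑ n ∈ Finset.Icc n₀ N, r n * t ^ n)| :=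
            intervalIntegral.abs_integral_le_integral_abs (le_of_lt hyη₃)
      _ ≤ ∫ t in y..η₃, (c * (-α)/4) * (Real.exp (-α/t) * t^(N-2)) := by
          apply intervalIntegral.integral_mono_on (le_of_lt hyη₃)
            ((hρint y η₃ hy0 (le_of_lt hyη₃) (lt_trans hη₃η hηδ)).abs)
            ((hJint (N-2) y η₃ hy0 (le_of_lt hyη₃)).const_mul _)
          intro t ht
          have ht0 : 0 < t := lt_of_lt_of_le hy0 ht.1
          have htu : t ∈ Ioo (0:ℝ) u := ⟨ht0, lt_of_le_of_lt ht.2 hη₃u⟩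
          obtain ⟨hρt, _⟩ := husub htu
          rw [Real.norm_eq_abs, Real.norm_eq_abs] at hρt
          have htN : |t ^ N| = t ^ N := abs_of_pos (zpow_pos ht0 N)
          rw [htN] at hρt
          have hEt : 0 < Real.exp (-α/t) / t^2 := by positivity
          rw [abs_mul, abs_of_pos hEt]
          calc Real.exp (-α/t)/t^2 * |R t - ∑ n ∈ Finset.Icc n₀ N, r n * t ^ n|
              ≤ Real.exp (-α/t)/t^2 * (c * (-α)/4 * t ^ N) :=
                mul_le_mul_of_nonneg_left hρt (le_of_lt hEt)
          _ = c * (-α)/4 * (Real.exp (-α/t) * (t ^ N / t^2)) := by ring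
          _ = c * (-α)/4 * (Real.exp (-α/t) * t^(N-2)) := by
                rw [show t^N / t^(2:ℕ) = t^(N-2) from by
                  rw [← zpow_natCast t 2, ← zpow_sub₀ ht0.ne']; norm_num]
    have hJ := hJ₁ η₃ hη₃pos hη₃η₁ y hy0 (le_of_lt hyη₃)
    have hE : 0 < Real.exp (α/y) := Real.exp_pos _
    have hyN : (0:ℝ) < y ^ N := zpow_pos hy0 N
    rw [hsplit, Real.norm_eq_abs, Real.norm_eq_abs, abs_of_pos hyN]
    have hint_nonneg : 0 ≤ ∫ t in y..η₃, Real.exp (-α/t) * t^(N-2) := by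
      apply intervalIntegral.integral_nonneg (le_of_lt hyη₃)
      intro w hw
      have hw0 : 0 < w := lt_of_lt_of_le hy0 hw.1
      positivity
    have hbound1 : Real.exp (α/y) * |∫ t in y..η₃, Real.exp (-α/t)/t^2 *
        (R t - ∑ n ∈ Finset.Icc n₀ N, r n * t ^ n)| ≤ (c/2) * y ^ N := by
      calc Real.exp (α/y) * |∫ t in y..η₃, Real.exp (-α/t)/t^2 *
            (R t - ∑ n ∈ Finset.Icc n₀ N, r n * t ^ n)|
          ≤ Real.exp (α/y) * ((c * (-α)/4) * ∫ t in y..η₃, Real.exp (-α/t) * t^(N-2)) :=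
            mul_le_mul_of_nonneg_left hb1 (le_of_lt hE)
      _ ≤ Real.exp (α/y) * ((c * (-α)/4) * ((-2/α) * (Real.exp (-α/y) * y ^ N))) := by
            apply mul_le_mul_of_nonneg_left _ (le_of_lt hE)
            exact mul_le_mul_of_nonneg_left hJ (by positivity)
      _ = (c * (-α)/4) * (-2/α) * ((Real.exp (α/y) * Real.exp (-α/y)) * y ^ N) := by ring
      _ = (c * (-α)/4) * (-2/α) * y ^ N := by rw [hexpinv y, one_mul]
      _ = (c/2) * y ^ N := by field_simp; ring
    have hbound2 : Real.exp (α/y) * |D| ≤ (c/2) * y ^ N := by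
      rw [Real.norm_eq_abs, Real.norm_eq_abs, abs_of_pos hE, abs_of_pos hyN] at hDy
      calc Real.exp (α/y) * |D| ≤ (c/(2*(|D|+1)) * y ^ N) * |D| :=
            mul_le_mul_of_nonneg_right hDy (abs_nonneg _)
      _ = (c/(2*(|D|+1)) * |D|) * y ^ N := by ring
      _ ≤ (c/2) * y ^ N := by
            apply mul_le_mul_of_nonneg_right _ hyN.le
            rw [div_mul_eq_mul_div, div_le_div_iff₀ (by positivity) (by norm_num)]
            nlinarith [mul_nonneg hc.le (abs_nonneg D)]
    calc |Real.exp (α/y) * ((∫ t in y..η₃, Real.exp (-α/t)/t^2 *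
          (R t - ∑ n ∈ Finset.Icc n₀ N, r n * t ^ n)) + D)|
        ≤ Real.exp (α/y) * |∫ t in y..η₃, Real.exp (-α/t)/t^2 *
          (R t - ∑ n ∈ Finset.Icc n₀ N, r n * t ^ n)| + Real.exp (α/y) * |D| := by
          rw [abs_mul, abs_of_pos hE, ← mul_add]
          exact mul_le_mul_of_nonneg_left (abs_add_le _ _) (le_of_lt hE)
    _ ≤ (c/2) * y ^ N + (c/2) * y ^ N := add_le_add hbound1 hbound2
    _ = c * y ^ N := by ring
  have hsum := (hT1.add hT2).add hT3
  refine hsum.congr' ?_ (Filter.EventuallyEq.refl _ _)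
  filter_upwards [Ioo_mem_nhdsGT hηpos] with y hy
  exact (hdecomp y hy).symm
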